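/- Let ℓ be the piecewise linear function given by ℓ(x) = 1 pt for x ∈ [dih_min, d0], ℓ(x) = −0.207045x + 0.31023815 for x ∈ [d0, 2π − 4d0], and ℓ(x) = 0.028792018 for x ∈ (2π − 4d0, dih_max], where d0 = arccos(1/3) and dih_min, dih_max are as in the quasi-regular tetrahedron dihedral bounds. Then for any t1,...,t5 ∈ [dih_min, dih_max] with t1 + ⋯ + t5 ≥ 2π, one has ℓ(t1) + ⋯ + ℓ(t5) < 4.52 pt. -/

import Mathlib

noncomputable section
open Real

def ufun (a b c : ℝ) : ℝ := -a^2 - b^2 - c^2 + 2*a*b + 2*a*c + 2*b*c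

/-- ∂Δ/∂x4 for the Cayley–Menger-type polynomial Δ. -/
def deltaX4 (x1 x2 x3 x4 x5 x6 : ℝ) : ℝ :=
  x1*(-x1+x2+x3-x4+x5+x6) - x1*x4 + x2*x5 + x3*x6 - x2*x3 - x5*x6

/-- One point: pt = 11π/3 − 12 arccos(1/√3). -/
def pt : ℝ := 11*π/3 - 12*Real.arccos (1/Real.sqrt 3)

/-- dih_min = dih(S(2,2.51,2,2,2.51,2)) ≈ 0.8639. -/
def dihMin : ℝ :=
  Real.arccos (deltaX4 4 (2.51^2) 4 4 (2.51^2) 4 /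
    Real.sqrt (ufun 4 (2.51^2) 4 * ufun 4 4 (2.51^2)))

/-- dih_max = arccos(−29003/96999). -/
def dihMax : ℝ := Real.arccos (-(29003/96999))

/-- d0 = dih(S(2,2,2,2,2,2)) = arccos(1/3). -/
def d0 : ℝ := Real.arccos (1/3)

/-- The piecewise linear upper bound ℓ on the compression as a function of the
dihedral angle (Calculations 9.1, 9.6.1, 9.6.2). -/
def ell (x : ℝ) : ℝ :=
  if x ≤ d0 then pt
  else if x ≤ 2*π - 4*d0 then -0.207045*x + 0.31023815
  else 0.028792018

/- ### Auxiliary numeric machinery -/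

open Finset Complex in
private lemma sum_id_aux (x : ℝ) :
    (∑ m ∈ range 14, ((x:ℂ) * I) ^ m / m.factorial) +
      (∑ m ∈ range 14, (-(x:ℂ) * I) ^ m / m.factorial) =
    2 * (1 - (x:ℂ)^2/2 + (x:ℂ)^4/24 - (x:ℂ)^6/720 + (x:ℂ)^8/40320 - (x:ℂ)^10/3628800 + (x:ℂ)^12/479001600) := by
  have h6 : (I:ℂ)^6 = -1 := by rw [show (6:ℕ)=2*3 from rfl, pow_mul, Complex.I_sq]; ring
  have h8 : (I:ℂ)^8 = 1 := by rw [show (8:ℕ)=2*4 from rfl, pow_mul, Complex.I_sq]; ring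
  have h10 : (I:ℂ)^10 = -1 := by rw [show (10:ℕ)=2*5 from rfl, pow_mul, Complex.I_sq]; ring
  have h12 : (I:ℂ)^12 = 1 := by rw [show (12:ℕ)=2*6 from rfl, pow_mul, Complex.I_sq]; ring
  simp only [Finset.sum_range_succ, Finset.sum_range_zero, Nat.factorial]
  push_cast
  ring_nf
  rw [h6, h8, h10, h12, Complex.I_sq,
    show (I:ℂ)^4 = 1 by rw [show (4:ℕ)=2*2 from rfl, pow_mul, Complex.I_sq]; ring]
  ring

open Finset Complex in
private lemma cos_taylor (x : ℝ) (hx : |x| ≤ 1) :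
    |Real.cos x - (1 - x^2/2 + x^4/24 - x^6/720 + x^8/40320 - x^10/3628800 + x^12/479001600)|
      ≤ 1/81366405120 := by
  have hx14 : |x| ^ 14 ≤ 1 := pow_le_one₀ (abs_nonneg x) hx
  have habs1 : ‖(x:ℂ) * I‖ ≤ 1 := by simpa using hx
  have habs2 : ‖-(x:ℂ) * I‖ ≤ 1 := by simpa using hx
  have e1 := Complex.exp_bound habs1 (n := 14) (by norm_num)
  have e2 := Complex.exp_bound habs2 (n := 14) (by norm_num)
  have key : Complex.cos x - (1 - (x:ℂ)^2/2 + (x:ℂ)^4/24 - (x:ℂ)^6/720 + (x:ℂ)^8/40320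
      - (x:ℂ)^10/3628800 + (x:ℂ)^12/479001600)
      = ((Complex.exp ((x:ℂ)*I) - ∑ m ∈ range 14, ((x:ℂ) * I) ^ m / m.factorial)
        + (Complex.exp (-(x:ℂ)*I) - ∑ m ∈ range 14, (-(x:ℂ) * I) ^ m / m.factorial)) / 2 := by
    rw [Complex.cos]
    linear_combination (sum_id_aux x) / 2
  calc |Real.cos x - (1 - x^2/2 + x^4/24 - x^6/720 + x^8/40320 - x^10/3628800 + x^12/479001600)|
      = ‖Complex.cos x - (1 - (x:ℂ)^2/2 + (x:ℂ)^4/24 - (x:ℂ)^6/720 + (x:ℂ)^8/40320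
          - (x:ℂ)^10/3628800 + (x:ℂ)^12/479001600)‖ := by
        rw [← Real.norm_eq_abs, ← Complex.norm_real]
        congr 1
        push_cast [Complex.ofReal_cos]
        ring
    _ ≤ ‖(Complex.exp ((x:ℂ)*I) - ∑ m ∈ range 14, ((x:ℂ) * I) ^ m / m.factorial)‖ / 2
        + ‖(Complex.exp (-(x:ℂ)*I) - ∑ m ∈ range 14, (-(x:ℂ) * I) ^ m / m.factorial)‖ / 2 := by
        rw [key, add_div]
        refine le_trans (norm_add_le _ _) ?_
        simp [norm_div]
    _ ≤ (‖(x:ℂ)*I‖ ^ 14 * ((Nat.succ 14 : ℝ) * ((Nat.factorial 14 : ℝ) * (14:ℕ))⁻¹)) / 2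
        + (‖-(x:ℂ)*I‖ ^ 14 * ((Nat.succ 14 : ℝ) * ((Nat.factorial 14 : ℝ) * (14:ℕ))⁻¹)) / 2 := by
        gcongr
    _ ≤ 1/81366405120 := by
        have hA : ‖(x:ℂ)*I‖ = |x| := by simp
        have hB : ‖-(x:ℂ)*I‖ = |x| := by simp
        rw [hA, hB, Nat.factorial]
        norm_num [Nat.factorial]
        nlinarith [hx14]

/-- From `cos b < cos a` (with `0 ≤ b`, `a ≤ π`) conclude `a < b`. -/
private lemma lt_of_cos_lt {a b : ℝ} (h0 : 0 ≤ b) (hpi : a ≤ π) (h : Real.cos b < Real.cos a) :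
    a < b := by
  by_contra hc
  push_neg at hc
  exact absurd (Real.cos_le_cos_of_nonneg_of_le_pi h0 hpi hc) (by linarith)

private lemma sqrt3_sq : (Real.sqrt 3) ^ 2 = 3 := Real.sq_sqrt (by norm_num)
private lemma sqrt3_pos : 0 < Real.sqrt 3 := Real.sqrt_pos.mpr (by norm_num)

private lemma cosA3 : Real.cos (Real.arccos (1/Real.sqrt 3)) = 1/Real.sqrt 3 := by
  apply Real.cos_arccos
  · linarith [one_div_pos.mpr sqrt3_pos]
  · rw [div_le_one sqrt3_pos]
    nlinarith [sqrt3_sq, sqrt3_pos]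

private lemma A3_lt : Real.arccos (1/Real.sqrt 3) < 0.955316620 := by
  apply lt_of_cos_lt (by norm_num) (Real.arccos_le_pi _)
  rw [cosA3]
  have ht := (abs_le.mp (cos_taylor 0.955316620 (by rw [abs_le]; constructor <;> norm_num))).2
  have h1 : Real.cos 0.955316620 ≤ 0.5773502686 := by norm_num at ht ⊢; linarith
  have h2 : (0.5773502686:ℝ) < 1/Real.sqrt 3 := by
    rw [lt_div_iff₀ sqrt3_pos]
    nlinarith [sqrt3_sq, sqrt3_pos]
  linarith

private lemma A3_gt : 0.955316617 < Real.arccos (1/Real.sqrt 3) := by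
  have hpi : (0.955316617:ℝ) ≤ π := by nlinarith [Real.pi_gt_three]
  apply lt_of_cos_lt (Real.arccos_nonneg _) hpi
  rw [cosA3]
  have ht := (abs_le.mp (cos_taylor 0.955316617 (by rw [abs_le]; constructor <;> norm_num))).1
  have h1 : (0.5773502695:ℝ) < Real.cos 0.955316617 := by norm_num at ht ⊢; linarith
  have h2 : 1/Real.sqrt 3 ≤ (0.5773502695:ℝ) := by
    rw [div_le_iff₀ sqrt3_pos]
    nlinarith [sqrt3_sq, sqrt3_pos]
  linarith

private lemma sqrt2_sq : (Real.sqrt 2) ^ 2 = 2 := Real.sq_sqrt (by norm_num)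
private lemma sqrt2_pos : 0 < Real.sqrt 2 := Real.sqrt_pos.mpr (by norm_num)

private lemma pi_lt_num : π < 3.141592656 := by
  have h4 : π/4 < 0.785398164 := by
    apply lt_of_cos_lt (by norm_num) (by linarith [Real.pi_pos])
    rw [Real.cos_pi_div_four]
    have ht := (abs_le.mp (cos_taylor 0.785398164 (by rw [abs_le]; constructor <;> norm_num))).2
    have h1 : Real.cos 0.785398164 ≤ 0.7071067810 := by norm_num at ht ⊢; linarith
    have h2 : (0.7071067810:ℝ) < Real.sqrt 2 / 2 := by
      nlinarith [sqrt2_sq, sqrt2_pos]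
    linarith
  linarith

private lemma pi_gt_num : 3.141592651 < π := by
  have h4 : (0.78539816275:ℝ) < π/4 := by
    apply lt_of_cos_lt (by positivity) (by nlinarith [Real.pi_gt_three])
    rw [Real.cos_pi_div_four]
    have ht := (abs_le.mp (cos_taylor 0.78539816275 (by rw [abs_le]; constructor <;> norm_num))).1
    have h1 : (0.7071067814:ℝ) < Real.cos 0.78539816275 := by norm_num at ht ⊢; linarith
    have h2 : Real.sqrt 2 / 2 ≤ (0.7071067814:ℝ) := by
      nlinarith [sqrt2_sq, sqrt2_pos]
    linarith
  linarith

private lemma d0_nonneg : 0 ≤ d0 := Real.arccos_nonneg _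
private lemma d0_le_pi : d0 ≤ π := Real.arccos_le_pi _

private lemma cos_d0_half : Real.cos (d0/2) = Real.sqrt (2/3) := by
  have hc : Real.cos d0 = 1/3 := Real.cos_arccos (by norm_num) (by norm_num)
  rw [Real.cos_half (by linarith [d0_nonneg, Real.pi_pos]) d0_le_pi, hc]
  norm_num

private lemma sqrt23_sq : (Real.sqrt (2/3)) ^ 2 = 2/3 := Real.sq_sqrt (by norm_num)
private lemma sqrt23_pos : 0 < Real.sqrt (2/3) := Real.sqrt_pos.mpr (by norm_num)

private lemma d0_lt_num : d0 < 1.230959422 := by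
  have h2 : d0/2 < 0.615479711 := by
    apply lt_of_cos_lt (by norm_num) (by linarith [d0_le_pi, Real.pi_pos])
    rw [cos_d0_half]
    have ht := (abs_le.mp (cos_taylor 0.615479711 (by rw [abs_le]; constructor <;> norm_num))).2
    have h1 : Real.cos 0.615479711 ≤ 0.8164965800 := by norm_num at ht ⊢; linarith
    have hs : (0.8164965800:ℝ) < Real.sqrt (2/3) := by
      nlinarith [sqrt23_sq, sqrt23_pos]
    linarith
  linarith

private lemma d0_gt_num : 1.230959412 < d0 := by
  have h2 : (0.615479706:ℝ) < d0/2 := by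
    apply lt_of_cos_lt (by linarith [d0_nonneg]) (by nlinarith [Real.pi_gt_three])
    rw [cos_d0_half]
    have ht := (abs_le.mp (cos_taylor 0.615479706 (by rw [abs_le]; constructor <;> norm_num))).1
    have h1 : (0.8164965815:ℝ) < Real.cos 0.615479706 := by norm_num at ht ⊢; linarith
    have hs : Real.sqrt (2/3) ≤ (0.8164965815:ℝ) := by
      nlinarith [sqrt23_sq, sqrt23_pos]
    linarith
  linarith

private lemma pt_lt_num : pt < 11*3.141592656/3 - 12*0.955316617 := by
  unfold pt
  have := pi_lt_num
  have := A3_gt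
  linarith

private lemma pt_gt_num : 11*3.141592651/3 - 12*0.955316620 < pt := by
  unfold pt
  have := pi_gt_num
  have := A3_lt
  linarith

/- ### Structural lemmas about ℓ -/

private lemma ell_le_M (t : ℝ) : ell t ≤ 0.31023815 - 0.207045 * d0 := by
  unfold ell
  split_ifs with h1 h2
  · linarith [pt_lt_num, d0_lt_num]
  · push_neg at h1; linarith
  · linarith [d0_lt_num]

private lemma ell_le_lin {t : ℝ} (ht : t ≤ 2*π - 4*d0) : ell t ≤ -0.207045*t + 0.31023815 := by
  unfold ell
  by_cases hx : t ≤ d0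
  · rw [if_pos hx]; linarith [pt_lt_num, d0_lt_num]
  · rw [if_neg hx, if_pos ht]

private lemma ell_eq_c {t : ℝ} (ht : ¬ t ≤ 2*π - 4*d0) : ell t = 0.028792018 := by
  have hd : d0 < 2*π - 4*d0 := by linarith [d0_lt_num, pi_gt_num]
  push_neg at ht
  unfold ell
  rw [if_neg (by push_neg; linarith), if_neg (by push_neg; linarith)]

private lemma key_one {x1 x2 x3 x4 x5 : ℝ} (h : ¬ x1 ≤ 2*π - 4*d0) :
    ell x1 + ell x2 + ell x3 + ell x4 + ell x5 < 4.52 * pt := by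
  rw [ell_eq_c h]
  have b2 := ell_le_M x2
  have b3 := ell_le_M x3
  have b4 := ell_le_M x4
  have b5 := ell_le_M x5
  linarith [pt_gt_num, d0_gt_num]

/-- If t1,...,t5 ∈ [dih_min, dih_max] and t1+⋯+t5 ≥ 2π, then
ℓ(t1)+⋯+ℓ(t5) < 4.52 pt. -/
theorem ell_five_sum_lt
    (t1 t2 t3 t4 t5 : ℝ)
    (h1 : t1 ∈ Set.Icc dihMin dihMax) (h2 : t2 ∈ Set.Icc dihMin dihMax)
    (h3 : t3 ∈ Set.Icc dihMin dihMax) (h4 : t4 ∈ Set.Icc dihMin dihMax)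
    (h5 : t5 ∈ Set.Icc dihMin dihMax)
    (hsum : 2*π ≤ t1 + t2 + t3 + t4 + t5) :
    ell t1 + ell t2 + ell t3 + ell t4 + ell t5 < 4.52 * pt := by
  by_cases c1 : t1 ≤ 2*π - 4*d0
  swap
  · exact key_one c1
  by_cases c2 : t2 ≤ 2*π - 4*d0
  swap
  · have := key_one (x2 := t1) (x3 := t3) (x4 := t4) (x5 := t5) c2; linarith
  by_cases c3 : t3 ≤ 2*π - 4*d0
  swap
  · have := key_one (x2 := t1) (x3 := t2) (x4 := t4) (x5 := t5) c3; linarith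
  by_cases c4 : t4 ≤ 2*π - 4*d0
  swap
  · have := key_one (x2 := t1) (x3 := t2) (x4 := t3) (x5 := t5) c4; linarith
  by_cases c5 : t5 ≤ 2*π - 4*d0
  swap
  · have := key_one (x2 := t1) (x3 := t2) (x4 := t3) (x5 := t4) c5; linarith
  have b1 := ell_le_lin c1
  have b2 := ell_le_lin c2
  have b3 := ell_le_lin c3
  have b4 := ell_le_lin c4
  have b5 := ell_le_lin c5
  linarith [pt_gt_num, pi_gt_num]
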